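/- Let ψ: ℂ³ → ℂ be an entire function satisfying ψ(η+1, u, v) = ψ(η, u+1, v) = ψ(η, u, v+1) = ψ(η, u, v), ψ(η+τ, u, v) = e^{-2πin(v-u)} ψ(η, u, v), ψ(η, u+τ, v) = e^{2πinη} ψ(η, u, v), and ψ(η, u, v+τ) = e^{-2πinη} ψ(η, u, v), where Im τ > 0 and n is a positive integer. Then ψ is identically zero. -/

import Mathlib

open Complex Set Filter Bornology Topology

/-- A doubly periodic entire function is constant. -/
lemma doubly_periodic_const {τ : ℂ} (hτ : 0 < τ.im) {f : ℂ → ℂ}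
    (hf : Differentiable ℂ f)
    (hp1 : Function.Periodic f 1) (hpτ : Function.Periodic f τ) :
    ∀ z w : ℂ, f z = f w := by
  have key : ∀ u : ℂ, ∃ w : ℂ, ‖w‖ ≤ 1 + ‖τ‖ ∧ f w = f u := by
    intro u
    set k : ℤ := ⌊u.im / τ.im⌋ with hk
    set u₁ : ℂ := u - (k : ℂ) * τ with hu₁
    set m : ℤ := ⌊u₁.re⌋ with hm
    have him1 : 0 ≤ u₁.im := by
      have h1 : (k : ℝ) ≤ u.im / τ.im := Int.floor_le _
      have : (k : ℝ) * τ.im ≤ u.im := by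
        rw [← le_div_iff₀ hτ]; exact h1
      simp [hu₁, Complex.sub_im, Complex.mul_im]
      linarith
    have him2 : u₁.im < τ.im := by
      have h1 : u.im / τ.im < (k : ℝ) + 1 := Int.lt_floor_add_one _
      have : u.im < ((k : ℝ) + 1) * τ.im := by
        rw [← div_lt_iff₀ hτ]; exact h1
      simp [hu₁, Complex.sub_im, Complex.mul_im]
      nlinarith
    refine ⟨u₁ - (m : ℂ), ?_, ?_⟩
    · have hre : 0 ≤ (u₁ - (m : ℂ)).re ∧ (u₁ - (m : ℂ)).re < 1 := by
        constructor
        · simp [Complex.sub_re]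
          exact Int.floor_le _
        · simp [Complex.sub_re]
          have := Int.lt_floor_add_one u₁.re
          linarith
      have him : (u₁ - (m : ℂ)).im = u₁.im := by simp [Complex.sub_im]
      have h1 : ‖u₁ - (m : ℂ)‖ ≤ |(u₁ - (m : ℂ)).re| + |(u₁ - (m : ℂ)).im| :=
        Complex.norm_le_abs_re_add_abs_im _
      have h2 : |(u₁ - (m : ℂ)).re| ≤ 1 := by rw [abs_le]; constructor <;> linarith [hre.1, hre.2]
      have h3 : |(u₁ - (m : ℂ)).im| ≤ ‖τ‖ := by
        rw [him, abs_le]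
        have := Complex.abs_im_le_norm τ
        rw [abs_le] at this
        constructor <;> linarith
      linarith
    · have e1 : f (u₁ - (m : ℂ)) = f u₁ := by
        have := (hp1.int_mul m) (u₁ - (m : ℂ))
        rw [show u₁ - (m : ℂ) + (m : ℂ) * 1 = u₁ by ring] at this
        exact this.symm
      have e2 : f u₁ = f u := by
        have := (hpτ.int_mul k) u₁
        rw [show u₁ + (k : ℂ) * τ = u by rw [hu₁]; ring] at this
        exact this.symm
      rw [e1, e2]
  have hbd : IsBounded (range f) := by
    have hK : IsCompact (f '' Metric.closedBall (0 : ℂ) (1 + ‖τ‖)) :=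
      (isCompact_closedBall _ _).image hf.continuous
    refine hK.isBounded.subset ?_
    rintro - ⟨u, rfl⟩
    obtain ⟨w, hw1, hw2⟩ := key u
    exact ⟨w, by simpa [Metric.mem_closedBall] using hw1, hw2⟩
  exact fun z w => hf.apply_eq_apply_of_bounded hbd z w

lemma key_vanish {τ : ℂ} (hτ : 0 < τ.im) {μ : ℂ} (hμ0 : μ ≠ 0)
    (hμ : ∀ k : ℤ, μ ≠ Complex.exp ((k : ℂ) * (2 * Real.pi * I) * τ))
    {g : ℂ → ℂ} (hg : Differentiable ℂ g)
    (hg1 : ∀ u, g (u + 1) = g u) (hgτ : ∀ u, g (u + τ) = μ * g u) :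
    ∀ u, g u = 0 := by
  by_contra hc
  push_neg at hc
  obtain ⟨u₀, hu₀⟩ := hc
  set P : ℂ → ℂ := fun u => g u * g (2 * u₀ - u) with hPdef
  have hPd : Differentiable ℂ P :=
    hg.mul (hg.comp ((differentiable_const _).sub differentiable_id))
  have hP1 : Function.Periodic P 1 := by
    intro u
    have h := hg1 (2 * u₀ - (u + 1))
    rw [show 2 * u₀ - (u + 1) + 1 = 2 * u₀ - u by ring] at h
    simp only [hPdef, hg1 u, h]
  have hPτ : Function.Periodic P τ := by
    intro u
    have h := hgτ (2 * u₀ - (u + τ))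
    rw [show 2 * u₀ - (u + τ) + τ = 2 * u₀ - u by ring] at h
    simp only [hPdef, hgτ u]
    rw [h]
    ring
  have hPc : ∀ u, P u = P u₀ := fun u => doubly_periodic_const hτ hPd hP1 hPτ u u₀
  have hPu₀ : P u₀ ≠ 0 := by
    simp only [hPdef]
    rw [show 2 * u₀ - u₀ = u₀ by ring]
    exact mul_ne_zero hu₀ hu₀
  have gnz : ∀ u, g u ≠ 0 := by
    intro u hu
    apply hPu₀
    rw [← hPc u]
    simp [hPdef, hu]
  -- derivative relations
  have hd1 : ∀ u, deriv g (u + 1) = deriv g u := by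
    intro u
    have e : (fun x => g (x + 1)) = g := funext hg1
    rw [← deriv_comp_add_const g 1 u, e]
  have hdτ : ∀ u, deriv g (u + τ) = μ * deriv g u := by
    intro u
    have e : (fun x => g (x + τ)) = fun x => μ * g x := funext hgτ
    rw [← deriv_comp_add_const g τ u, e, deriv_const_mul_field]
  have hganl : AnalyticOnNhd ℂ g univ := analyticOnNhd_univ_iff_differentiable.mpr hg
  have hdg : Differentiable ℂ (deriv g) := by
    intro x
    exact ((hganl.deriv) x (mem_univ x)).differentiableAt
  set F : ℂ → ℂ := fun u => deriv g u / g u with hFdef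
  have hFd : Differentiable ℂ F := hdg.div hg gnz
  have hF1 : Function.Periodic F 1 := fun u => by simp only [hFdef, hd1, hg1]
  have hFτ : Function.Periodic F τ := by
    intro u
    simp only [hFdef, hdτ, hgτ]
    rw [mul_div_mul_left _ _ hμ0]
  have hFc : ∀ u, F u = F 0 := fun u => doubly_periodic_const hτ hFd hF1 hFτ u 0
  set a : ℂ := F 0 with ha
  have hderiv : ∀ u, deriv g u = a * g u := by
    intro u
    have h := hFc u
    simp only [hFdef] at h
    rw [div_eq_iff (gnz u)] at h
    exact h
  -- G := g * exp(-a u) is constant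
  set G : ℂ → ℂ := fun u => g u * Complex.exp (-a * u) with hGdef
  have hGd : Differentiable ℂ G :=
    hg.mul ((differentiable_id.const_mul (-a)).cexp)
  have hG' : ∀ u, deriv G u = 0 := by
    intro u
    have h1 : HasDerivAt g (a * g u) u := by
      have := (hg u).hasDerivAt
      rwa [hderiv u] at this
    have h2 : HasDerivAt (fun x : ℂ => Complex.exp (-a * x)) (Complex.exp (-a * u) * -a) u := by
      have := ((hasDerivAt_id u).const_mul (-a)).cexp
      simpa using this
    have h3 : HasDerivAt G (a * g u * Complex.exp (-a * u) + g u * (Complex.exp (-a * u) * -a)) u :=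
      h1.mul h2
    rw [h3.deriv]
    ring
  have hGc : ∀ u, G u = G 0 := fun u => is_const_of_deriv_eq_zero hGd hG' u 0
  have hgu : ∀ u, g u = g 0 * Complex.exp (a * u) := by
    intro u
    have h := hGc u
    simp only [hGdef] at h
    rw [mul_zero, Complex.exp_zero, mul_one] at h
    have h2 : g u * Complex.exp (-a * u) * Complex.exp (a * u)
        = g 0 * Complex.exp (a * u) := by rw [h]
    rwa [mul_assoc, ← Complex.exp_add, show -a * u + a * u = 0 by ring,
      Complex.exp_zero, mul_one] at h2
  have hg0 : g 0 ≠ 0 := gnz 0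
  -- exp a = 1
  have hexpa : Complex.exp a = 1 := by
    have h := hg1 0
    rw [zero_add, hgu 1, mul_one] at h
    have h2 : g 0 * Complex.exp a = g 0 * 1 := by rw [mul_one]; exact h
    exact mul_left_cancel₀ hg0 h2
  obtain ⟨kk, hkk⟩ := Complex.exp_eq_one_iff.mp hexpa
  -- μ = exp (a τ)
  have hμτ : μ = Complex.exp (a * τ) := by
    have h := hgτ 0
    rw [zero_add, hgu τ] at h
    have h2 : g 0 * Complex.exp (a * τ) = g 0 * μ := by rw [h]; ring
    exact (mul_left_cancel₀ hg0 h2).symm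
  apply hμ kk
  rw [hμτ, hkk]

theorem quasi_periodic_entire_eq_zero (τ : ℂ) (hτ : 0 < τ.im) (n : ℕ) (hn : 0 < n)
    (ψ : ℂ × ℂ × ℂ → ℂ) (hψ : Differentiable ℂ ψ)
    (h1 : ∀ η u v : ℂ, ψ (η + 1, u, v) = ψ (η, u, v))
    (h2 : ∀ η u v : ℂ, ψ (η, u + 1, v) = ψ (η, u, v))
    (h3 : ∀ η u v : ℂ, ψ (η, u, v + 1) = ψ (η, u, v))
    (h4 : ∀ η u v : ℂ, ψ (η + τ, u, v) =
      Complex.exp (-(2 * ↑Real.pi * I) * (n : ℂ) * (v - u)) * ψ (η, u, v))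
    (h5 : ∀ η u v : ℂ, ψ (η, u + τ, v) =
      Complex.exp (2 * ↑Real.pi * I * (n : ℂ) * η) * ψ (η, u, v))
    (h6 : ∀ η u v : ℂ, ψ (η, u, v + τ) =
      Complex.exp (-(2 * ↑Real.pi * I) * (n : ℂ) * η) * ψ (η, u, v)) :
    ψ = 0 := by
  have main : ∀ η : ℂ,
      (∀ k : ℤ, Complex.exp (2 * ↑Real.pi * I * (n : ℂ) * η)
        ≠ Complex.exp ((k : ℂ) * (2 * Real.pi * I) * τ)) →
      ∀ u v : ℂ, ψ (η, u, v) = 0 := by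
    intro η hη u v
    have hgd : Differentiable ℂ (fun u : ℂ => ψ (η, u, v)) :=
      hψ.comp ((differentiable_const η).prodMk (differentiable_id.prodMk (differentiable_const v)))
    exact key_vanish hτ (Complex.exp_ne_zero _) hη hgd
      (fun u => h2 η u v) (fun u => h5 η u v) u
  -- the sequence of good η values
  set t : ℕ → ℝ := fun j => Real.sqrt 2 * τ.im / (n * (j + 1)) with ht
  have htpos : ∀ j, 0 < t j := by
    intro j
    apply div_pos (mul_pos (Real.sqrt_pos.mpr (by norm_num)) hτ)
    positivity
  set η : ℕ → ℂ := fun j => Complex.I * (t j : ℝ) with hηdef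
  have hηne : ∀ j, η j ≠ 0 := by
    intro j
    simp only [hηdef]
    exact mul_ne_zero Complex.I_ne_zero (by exact_mod_cast (htpos j).ne')
  have hgood : ∀ j, ∀ k : ℤ, Complex.exp (2 * ↑Real.pi * I * (n : ℂ) * η j)
      ≠ Complex.exp ((k : ℂ) * (2 * Real.pi * I) * τ) := by
    intro j k heq
    have hre : (2 * ↑Real.pi * I * (n : ℂ) * η j).re = ((k : ℂ) * (2 * Real.pi * I) * τ).re := by
      have := congrArg (‖·‖) heq
      rw [Complex.norm_exp, Complex.norm_exp] at this
      exact Real.exp_injective this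
    simp only [hηdef] at hre
    rw [show 2 * ↑Real.pi * I * (n : ℂ) * (Complex.I * (t j : ℝ))
        = ((-(2 * Real.pi * n * t j) : ℝ) : ℂ) by
      push_cast; rw [show ((2:ℂ) * ↑Real.pi * I * (n:ℂ) * (Complex.I * (t j : ℝ)))
        = (2 * ↑Real.pi * (n:ℂ) * (t j : ℝ)) * (I*I) by ring]; rw [Complex.I_mul_I]; ring] at hre
    rw [show ((k : ℂ) * (2 * Real.pi * I) * τ) = ((k * (2 * Real.pi) : ℝ) : ℂ) * (I * τ) by
      push_cast; ring] at hre
    simp only [Complex.ofReal_re, Complex.re_ofReal_mul, Complex.mul_re, Complex.I_re,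
      Complex.I_im, Complex.ofReal_im] at hre
    have hpi : (0:ℝ) < Real.pi := Real.pi_pos
    have hre2 : (n : ℝ) * t j = k * τ.im := by nlinarith [hre]
    simp only [ht] at hre2
    have hn0 : (n : ℝ) ≠ 0 := by positivity
    have hj0 : ((j : ℝ) + 1) ≠ 0 := by positivity
    have hτne : τ.im ≠ 0 := hτ.ne'
    have hsqrt : Real.sqrt 2 = (k : ℝ) * ((j : ℝ) + 1) := by
      have e1 : (n : ℝ) * (Real.sqrt 2 * τ.im / ((n : ℝ) * ((j : ℝ) + 1)))
          = Real.sqrt 2 * τ.im / ((j : ℝ) + 1) := by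
        field_simp
      rw [e1, div_eq_iff hj0] at hre2
      have e2 : Real.sqrt 2 * τ.im = ((k : ℝ) * ((j : ℝ) + 1)) * τ.im := by
        rw [hre2]; ring
      exact mul_right_cancel₀ hτne e2
    have : Irrational (Real.sqrt 2) := irrational_sqrt_two
    apply this.ne_int (k * (j + 1))
    rw [hsqrt]
    push_cast
    ring
  -- identity theorem
  funext p
  obtain ⟨η₀, u, v⟩ := p
  have hfd : Differentiable ℂ (fun z : ℂ => ψ (z, u, v)) :=
    hψ.comp (differentiable_id.prodMk ((differentiable_const u).prodMk (differentiable_const v)))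
  have hA : AnalyticOnNhd ℂ (fun z : ℂ => ψ (z, u, v)) univ :=
    analyticOnNhd_univ_iff_differentiable.mpr hfd
  have htend : Tendsto η atTop (𝓝[≠] (0 : ℂ)) := by
    apply tendsto_nhdsWithin_of_tendsto_nhds_of_eventually_within
    · have h0 : Tendsto t atTop (𝓝 0) := by
        rw [ht]
        have : (fun j : ℕ => Real.sqrt 2 * τ.im / (n * (j + 1)))
            = fun j : ℕ => (Real.sqrt 2 * τ.im / n) / ((j : ℝ) + 1) := by
          funext j; field_simp
        rw [this]
        have htmp := (tendsto_const_div_atTop_nhds_zero_nat (Real.sqrt 2 * τ.im / n)).comp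
          (tendsto_add_atTop_nat 1)
        refine htmp.congr fun j => ?_
        simp only [Function.comp]
        push_cast
        ring
      have : Tendsto (fun j => ((t j : ℝ) : ℂ)) atTop (𝓝 ((0:ℝ):ℂ)) :=
        (Complex.continuous_ofReal.tendsto _).comp h0
      have h2 := this.const_mul Complex.I
      simpa using h2
    · exact Eventually.of_forall (fun j => hηne j)
  have hfreq : ∃ᶠ z in 𝓝[≠] (0 : ℂ), (fun z : ℂ => ψ (z, u, v)) z = 0 :=
    htend.frequently (Frequently.of_forall (fun j => main (η j) (hgood j) u v))
  have := hA.eqOn_zero_of_preconnected_of_frequently_eq_zero isPreconnected_univ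
    (mem_univ (0 : ℂ)) hfreq
  exact this (mem_univ η₀)
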